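/- arXiv:2402.12678 — 8 statements merged into one kernel-verified Lean document; each statement's English description precedes it below -/
import Mathlib

section
/- Let (a_n)_{n≥0} be a sequence of non-negative real numbers, let α ≥ 0, β ≥ 0 and γ be real numbers with γ ≥ α + β, and let N ∈ ℕ. Assume that a_{n+2} + α·β·a_n ≥ γ·a_{n+1} for every n ∈ {0, …, N}, and that a_1 > β·a_0. Then for every n ∈ {0, …, N} one has a_{n+2} − β·a_{n+1} ≥ α^{n+1}·(a_1 − β·a_0); in particular, if α > 0 then a_{n+2} > β·a_{n+1} for every n ∈ {0, …, N}. -/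
/-- Finite-range recursive inequality lemma: if `a (n+2) + α*β*a n ≥ γ*a (n+1)` for
`n = 0, …, N`, with `γ ≥ α + β`, `α, β ≥ 0`, nonnegative terms, and `a 1 > β * a 0`,
then `a (n+2) - β * a (n+1) ≥ α^(n+1) * (a 1 - β * a 0)` for `n = 0, …, N`;
in particular if `α > 0` then `a (n+2) > β * a (n+1)` on this range. -/
theorem stmt_0 (a : ℕ → ℝ) (ha : ∀ n, 0 ≤ a n)
    (α β γ : ℝ) (hα : 0 ≤ α) (hβ : 0 ≤ β) (hγ : α + β ≤ γ) (N : ℕ)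
    (hrec : ∀ n ≤ N, γ * a (n + 1) ≤ a (n + 2) + α * β * a n)
    (hinit : β * a 0 < a 1) :
    ∀ n ≤ N, α ^ (n + 1) * (a 1 - β * a 0) ≤ a (n + 2) - β * a (n + 1)
      ∧ (0 < α → β * a (n + 1) < a (n + 2)) := by
  have key : ∀ n ≤ N, α ^ (n + 1) * (a 1 - β * a 0) ≤ a (n + 2) - β * a (n + 1) := by
    intro n
    induction n with
    | zero =>
      intro hn
      have h := hrec 0 hn
      have h2 : (α + β) * a 1 ≤ γ * a 1 := by
        exact mul_le_mul_of_nonneg_right hγ (ha 1)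
      norm_num at h ⊢
      nlinarith [ha 0, ha 1]
    | succ n ih =>
      intro hn
      have hnN : n ≤ N := Nat.le_of_succ_le hn
      have ih' := ih hnN
      have h : γ * a (n + 2) ≤ a (n + 3) + α * β * a (n + 1) := by
        have := hrec (n + 1) hn
        convert this using 3 <;> omega
      have h2 : (α + β) * a (n + 2) ≤ γ * a (n + 2) := by
        exact mul_le_mul_of_nonneg_right hγ (ha (n + 2))
      have step : α * (a (n + 2) - β * a (n + 1)) ≤ a (n + 3) - β * a (n + 2) := by
        nlinarith
      calc α ^ (n + 2) * (a 1 - β * a 0)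
          = α * (α ^ (n + 1) * (a 1 - β * a 0)) := by ring
        _ ≤ α * (a (n + 2) - β * a (n + 1)) := by
            exact mul_le_mul_of_nonneg_left ih' hα
        _ ≤ a (n + 3) - β * a (n + 2) := step
  intro n hn
  refine ⟨key n hn, fun hαpos => ?_⟩
  have := key n hn
  have hp : 0 < α ^ (n + 1) * (a 1 - β * a 0) :=
    mul_pos (pow_pos hαpos _) (by linarith)
  linarith
end

section
/- Let S be a noetherian quasi-sober topological space and let θ : S → ℝ be a function. Then θ is lower semicontinuous if and only if the following two conditions hold: (i) for all points x, y ∈ S with y ∈ closure{x}, one has θ(y) ≤ θ(x); (ii) for every x ∈ S and every real number a < θ(x), there exists an open subset U of S containing x such that θ(z) > a for every z ∈ U ∩ closure{x}. -/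
/-- Criterion for lower semicontinuity on a noetherian quasi-sober space:
`θ` is lower semicontinuous iff (i) `θ` is non-decreasing under specialization
(`y ∈ closure {x}` implies `θ y ≤ θ x`), and (ii) for every `x` and `a < θ x`
there is an open set `U ∋ x` with `θ > a` on `U ∩ closure {x}`. -/
theorem stmt_2 {S : Type*} [TopologicalSpace S] [TopologicalSpace.NoetherianSpace S]
    [QuasiSober S] (θ : S → ℝ) :
    LowerSemicontinuous θ ↔
      ((∀ x y : S, y ∈ closure {x} → θ y ≤ θ x) ∧
        (∀ x : S, ∀ a : ℝ, a < θ x →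
          ∃ U : Set S, IsOpen U ∧ x ∈ U ∧ ∀ z ∈ U ∩ closure {x}, a < θ z)) := by
  constructor
  · intro h
    rw [lowerSemicontinuous_iff_isOpen_preimage] at h
    refine ⟨?_, ?_⟩
    · intro x y hy
      by_contra hlt
      push_neg at hlt
      obtain ⟨a, hax, hay⟩ := exists_between hlt
      have hU : IsOpen (θ ⁻¹' Set.Ioi a) := h a
      have hyU : y ∈ θ ⁻¹' Set.Ioi a := hay
      have := mem_closure_iff.mp hy _ hU hyU
      obtain ⟨z, hz1, hz2⟩ := this
      rw [Set.mem_singleton_iff] at hz2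
      subst hz2
      exact absurd hz1 (not_lt.mpr hax.le)
    · intro x a ha
      exact ⟨θ ⁻¹' Set.Ioi a, h a, ha, fun z hz => hz.1⟩
  · rintro ⟨h1, h2⟩
    rw [lowerSemicontinuous_iff_isOpen_preimage]
    intro a
    rw [← isClosed_compl_iff]
    have hcompl : (θ ⁻¹' Set.Ioi a)ᶜ = θ ⁻¹' Set.Iic a := by
      ext z; simp [not_lt]
    rw [hcompl]
    set C : Set S := θ ⁻¹' Set.Iic a with hC
    -- key: every closed set in which C is dense is contained in C
    have key : ∀ Z : TopologicalSpace.Closeds S,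
        closure (C ∩ (Z : Set S)) = (Z : Set S) → (Z : Set S) ⊆ C := by
      intro Z
      induction Z using WellFoundedLT.induction with
      | _ Z IH =>
        intro hdense
        rcases Set.eq_empty_or_nonempty (Z : Set S) with hZ | hne
        · rw [hZ]; exact Set.empty_subset _
        by_cases hirr : IsPreirreducible (Z : Set S)
        · -- irreducible case: use the generic point
          obtain ⟨η, hη⟩ := QuasiSober.sober ⟨hne, hirr⟩ Z.isClosed
          have hηZ : closure ({η} : Set S) = (Z : Set S) := hη
          have hηa : θ η ≤ a := by
            by_contra hgt
            push_neg at hgt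
            obtain ⟨U, hUopen, hηU, hUa⟩ := h2 η a hgt
            have hηcl : η ∈ closure (C ∩ (Z : Set S)) := by
              rw [hdense, ← hηZ]; exact subset_closure rfl
            obtain ⟨z, hzU, hzC, hzZ⟩ := mem_closure_iff.mp hηcl U hUopen hηU
            have : a < θ z := hUa z ⟨hzU, by rw [hηZ]; exact hzZ⟩
            exact absurd hzC (not_le.mpr this)
          intro y hy
          have : θ y ≤ θ η := h1 η y (by rw [hηZ]; exact hy)
          exact le_trans this hηa
        · -- reducible case: split and apply the inductive hypothesis
          rw [isPreirreducible_iff_isClosed_union_isClosed] at hirr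
          push_neg at hirr
          obtain ⟨Z₁, Z₂, hZ₁, hZ₂, hsub, hn1, hn2⟩ := hirr
          have hstep : ∀ W : Set S, IsClosed W → W ⊆ (Z : Set S) → ¬ (Z : Set S) ⊆ W →
              closure (C ∩ W) ⊆ C := by
            intro W hWc hWsub hWne
            set W' : TopologicalSpace.Closeds S := ⟨closure (C ∩ W), isClosed_closure⟩ with hW'
            have hW'sub : (W' : Set S) ⊆ W := by
              simpa [hW'] using closure_minimal Set.inter_subset_right hWc
            have hlt : W' < Z := by
              refine lt_of_le_of_ne (fun z hz => hWsub (hW'sub hz)) ?_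
              intro heq
              obtain ⟨x, hxZ, hxW⟩ := Set.not_subset.mp hWne
              exact hxW (hW'sub (by rw [heq]; exact hxZ))
            have hdense' : closure (C ∩ (W' : Set S)) = (W' : Set S) := by
              apply subset_antisymm
              · exact closure_minimal Set.inter_subset_right W'.isClosed
              · show closure (C ∩ W) ⊆ closure (C ∩ closure (C ∩ W))
                apply closure_mono
                intro z hz
                exact ⟨hz.1, subset_closure hz⟩
            exact IH W' hlt hdense'
          -- Z ∩ (Z₁ᶜ ∪ Z₂ᶜ)... use W₁ = Z ∩ Z₁, W₂ = Z ∩ Z₂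
          have hunion : (Z : Set S) ⊆ closure (C ∩ ((Z : Set S) ∩ Z₁)) ∪
              closure (C ∩ ((Z : Set S) ∩ Z₂)) := by
            rw [← closure_union]
            calc (Z : Set S) = closure (C ∩ (Z : Set S)) := hdense.symm
              _ ⊆ closure (C ∩ ((Z : Set S) ∩ Z₁) ∪ C ∩ ((Z : Set S) ∩ Z₂)) := by
                  apply closure_mono
                  rintro z ⟨hzC, hzZ⟩
                  rcases hsub hzZ with h | h
                  · exact Or.inl ⟨hzC, hzZ, h⟩
                  · exact Or.inr ⟨hzC, hzZ, h⟩
          intro y hy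
          rcases hunion hy with h | h
          · exact hstep _ (Z.isClosed.inter hZ₁) Set.inter_subset_left
              (fun hs => hn1 (fun z hz => (hs hz).2)) h
          · exact hstep _ (Z.isClosed.inter hZ₂) Set.inter_subset_left
              (fun hs => hn2 (fun z hz => (hs hz).2)) h
    have : closure C ⊆ C := by
      have := key ⟨closure C, isClosed_closure⟩ (by
        simp only [TopologicalSpace.Closeds.coe_mk]
        rw [Set.inter_eq_left.mpr subset_closure])
      simpa using this
    exact isClosed_of_closure_subset this
end

section
/- Let S be a noetherian topological space and let θ : S → ℝ be a lower semicontinuous function. Then the image θ(S) is well-ordered by the usual order of ℝ: every nonempty subset of θ(S) has a least element. -/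
/-- On a noetherian topological space, the image of a lower semicontinuous real-valued
function is well-ordered by the usual order: every nonempty subset of the image has a
least element. -/
theorem stmt_3 {S : Type*} [TopologicalSpace S] [TopologicalSpace.NoetherianSpace S]
    (θ : S → ℝ) (hθ : LowerSemicontinuous θ) :
    ∀ T ⊆ Set.range θ, T.Nonempty → ∃ m ∈ T, ∀ t ∈ T, m ≤ t := by
  intro T hT hne
  by_contra h
  push_neg at h
  -- every element of T has a strictly smaller element of T
  have key : ∀ x : T, ∃ y : T, (y : ℝ) < x := by
    intro ⟨x, hx⟩
    obtain ⟨t, ht, hlt⟩ := h x hx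
    exact ⟨⟨t, ht⟩, hlt⟩
  choose g hg using key
  obtain ⟨x0⟩ : Nonempty T := hne.to_subtype
  set f : ℕ → T := fun n => g^[n] x0 with hf
  have hdec : ∀ n, (f (n + 1) : ℝ) < f n := by
    intro n
    have : f (n + 1) = g (f n) := by
      simp [hf, Function.iterate_succ_apply']
    rw [this]
    exact hg (f n)
  -- closed sets Z n = θ⁻¹(-∞, f n]
  have hclosed : ∀ n : ℕ, IsClosed (θ ⁻¹' Set.Iic ((f n : ℝ))) := by
    intro n
    have := hθ.isOpen_preimage (f n)
    have : IsOpen (θ ⁻¹' Set.Ioi ((f n : ℝ))) := this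
    have hcompl : θ ⁻¹' Set.Iic ((f n : ℝ)) = (θ ⁻¹' Set.Ioi ((f n : ℝ)))ᶜ := by
      ext s; simp [not_lt]
    rw [hcompl]
    exact this.isClosed_compl
  set C : ℕ → TopologicalSpace.Closeds S := fun n => ⟨θ ⁻¹' Set.Iic ((f n : ℝ)), hclosed n⟩
  have hC : ∀ n, C (n + 1) < C n := by
    intro n
    constructor
    · intro s hs
      exact le_trans hs (hdec n).le
    · intro hle
      obtain ⟨s, hs⟩ := hT (f n).2
      have hmem : s ∈ (C n : Set S) := by simp [C, hs]
      have h2 : θ s ≤ (f (n + 1) : ℝ) := hle hmem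
      rw [hs] at h2
      exact absurd (hdec n) (not_lt.2 h2)
  exact (RelEmbedding.natGT C hC).not_wellFounded
    (wellFounded_lt : WellFounded ((· < ·) : TopologicalSpace.Closeds S → _ → Prop))
end

section
/- Let S be a nonempty noetherian, quasi-sober, T0 topological space and let θ : S → ℝ be a lower semicontinuous function whose image θ(S) is a discrete subset of ℝ. Then θ(S) is finite, and for every a ∈ ℝ the fiber θ⁻¹({a}) is a locally closed subset of S (it is the set-difference of two closed subsets of S). -/
open Set TopologicalSpace

/-- A lower semicontinuous function is monotone along specialization: if `y` lies in the
closure of `{x}`, then `θ y ≤ θ x`. -/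
lemma lsc_le_of_mem_closure {S : Type*} [TopologicalSpace S] (θ : S → ℝ)
    (hθ : LowerSemicontinuous θ) {x y : S} (h : y ∈ closure ({x} : Set S)) : θ y ≤ θ x := by
  by_contra hlt
  push_neg at hlt
  have hU : IsOpen (θ ⁻¹' Set.Ioi (θ x)) := hθ.isOpen_preimage (θ x)
  have hyU : y ∈ θ ⁻¹' Set.Ioi (θ x) := hlt
  rcases mem_closure_iff.1 h _ hU hyU with ⟨z, hz, hz'⟩
  rw [Set.mem_singleton_iff] at hz'
  subst hz'
  exact lt_irrefl (θ z) hz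

/-- Main finiteness lemma: image of any closed set is finite. -/
lemma image_finite_of_closed {S : Type*} [TopologicalSpace S]
    [TopologicalSpace.NoetherianSpace S] [QuasiSober S] (θ : S → ℝ)
    (hθ : LowerSemicontinuous θ)
    (hdisc : ∀ a ∈ Set.range θ, ∃ U ∈ nhds a, U ∩ Set.range θ = {a}) :
    ∀ Z : Closeds S, (θ '' (Z : Set S)).Finite := by
  intro Z₀
  refine wellFounded_lt.induction (C := fun Z : Closeds S => (θ '' (Z : Set S)).Finite) Z₀ ?_
  intro Z IH
  rcases eq_or_ne (Z : Set S) ∅ with hZ | hZne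
  · simp [hZ]
  have hZnonempty : (Z : Set S).Nonempty := nonempty_iff_ne_empty.2 hZne
  by_cases hirr : IsPreirreducible (Z : Set S)
  · -- irreducible case: use the generic point
    have hIrr : IsIrreducible (Z : Set S) := ⟨hZnonempty, hirr⟩
    set η := hIrr.genericPoint with hη
    have hgen : closure ({η} : Set S) = (Z : Set S) :=
      hIrr.closure_genericPoint Z.isClosed
    have hηZ : η ∈ (Z : Set S) := by
      rw [← hgen]; exact subset_closure rfl
    set m := θ η with hm
    have hle : ∀ x ∈ (Z : Set S), θ x ≤ m := by
      intro x hx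
      exact lsc_le_of_mem_closure θ hθ (hgen ▸ hx)
    obtain ⟨U, hU, hUr⟩ := hdisc m ⟨η, rfl⟩
    obtain ⟨ε, hε, hball⟩ := Metric.mem_nhds_iff.1 hU
    set W := θ ⁻¹' Set.Ioi (m - ε) with hW
    have hWopen : IsOpen W := hθ.isOpen_preimage _
    have hηW : η ∈ W := by
      simp only [hW, Set.mem_preimage, Set.mem_Ioi, ← hm]
      linarith
    -- Z \ W is a proper closed subset
    set Z' : Closeds S := ⟨(Z : Set S) \ W, Z.isClosed.sdiff hWopen⟩ with hZ'
    have hlt : Z' < Z := by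
      refine lt_of_le_of_ne (fun x hx => hx.1) ?_
      intro heq
      have : η ∈ (Z' : Set S) := by rw [heq]; exact hηZ
      exact this.2 hηW
    have hsub : θ '' (Z : Set S) ⊆ insert m (θ '' (Z' : Set S)) := by
      rintro _ ⟨x, hx, rfl⟩
      by_cases hxW : x ∈ W
      · left
        have h1 : θ x ∈ U := by
          apply hball
          rw [Metric.mem_ball, Real.dist_eq, abs_lt]
          have := hle x hx
          have : θ x > m - ε := hxW
          constructor <;> linarith [hle x hx]
        have : θ x ∈ U ∩ Set.range θ := ⟨h1, ⟨x, rfl⟩⟩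
        rw [hUr] at this
        exact this
      · right; exact ⟨x, ⟨hx, hxW⟩, rfl⟩
    exact ((IH Z' hlt).insert m).subset hsub
  · -- reducible case: split into two proper closed subsets
    rw [isPreirreducible_iff_isClosed_union_isClosed] at hirr
    push_neg at hirr
    obtain ⟨C₁, C₂, hC₁, hC₂, hsub, hn₁, hn₂⟩ := hirr
    set Z₁ : Closeds S := ⟨(Z : Set S) ∩ C₁, Z.isClosed.inter hC₁⟩ with hZ₁
    set Z₂ : Closeds S := ⟨(Z : Set S) ∩ C₂, Z.isClosed.inter hC₂⟩ with hZ₂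
    have hlt₁ : Z₁ < Z := by
      refine lt_of_le_of_ne (fun x hx => hx.1) ?_
      intro heq
      exact hn₁ (fun x hx => by
        have : x ∈ (Z₁ : Set S) := by rw [heq]; exact hx
        exact this.2)
    have hlt₂ : Z₂ < Z := by
      refine lt_of_le_of_ne (fun x hx => hx.1) ?_
      intro heq
      exact hn₂ (fun x hx => by
        have : x ∈ (Z₂ : Set S) := by rw [heq]; exact hx
        exact this.2)
    have hcover : θ '' (Z : Set S) ⊆ θ '' (Z₁ : Set S) ∪ θ '' (Z₂ : Set S) := by
      rintro _ ⟨x, hx, rfl⟩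
      rcases hsub hx with h | h
      · exact Or.inl ⟨x, ⟨hx, h⟩, rfl⟩
      · exact Or.inr ⟨x, ⟨hx, h⟩, rfl⟩
    exact ((IH Z₁ hlt₁).union (IH Z₂ hlt₂)).subset hcover

/-- On a nonempty noetherian, quasi-sober, T0 topological space, a lower semicontinuous
real-valued function whose image is a discrete subset of `ℝ` has finite image, and each
of its fibers is the difference of two closed subsets (hence locally closed). -/
theorem stmt_4 {S : Type*} [TopologicalSpace S] [TopologicalSpace.NoetherianSpace S]
    [QuasiSober S] [T0Space S] [Nonempty S] (θ : S → ℝ)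
    (hθ : LowerSemicontinuous θ)
    (hdisc : ∀ a ∈ Set.range θ, ∃ U ∈ nhds a, U ∩ Set.range θ = {a}) :
    (Set.range θ).Finite ∧
      ∀ a : ℝ, ∃ Z₁ Z₂ : Set S, IsClosed Z₁ ∧ IsClosed Z₂ ∧ θ ⁻¹' {a} = Z₁ \ Z₂ := by
  have hfin : (Set.range θ).Finite := by
    have := image_finite_of_closed θ hθ hdisc ⊤
    simpa [Set.image_univ] using this
  refine ⟨hfin, fun a => ?_⟩
  set T : Set ℝ := Set.range θ ∩ Set.Iio a with hT
  have hTfin : T.Finite := hfin.inter_of_left _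
  refine ⟨θ ⁻¹' Set.Iic a, ⋃ c ∈ T, θ ⁻¹' Set.Iic c, hθ.isClosed_preimage a, ?_, ?_⟩
  · exact hTfin.isClosed_biUnion (fun c _ => hθ.isClosed_preimage c)
  · ext x
    simp only [Set.mem_preimage, Set.mem_singleton_iff, Set.mem_diff, Set.mem_iUnion,
      Set.mem_Iic, not_exists, exists_prop, not_and]
    constructor
    · intro hxa
      refine ⟨le_of_eq hxa, fun c hc h => ?_⟩
      have : c < a := hc.2
      linarith
    · rintro ⟨h1, h2⟩
      by_contra hne
      have hlt : θ x < a := lt_of_le_of_ne h1 hne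
      exact h2 (θ x) ⟨⟨x, rfl⟩, hlt⟩ le_rfl
end

section
/- Let (a_n)_{n≥1} be a sequence of non-negative real numbers such that for every n ≥ 1 one has a_{n+1} ≤ (a_1 + a_2 + ⋯ + a_n)/n (each term is at most the average of all previous terms). Then for all integers r ≥ 1 and s ≥ 1 one has a_r + a_{r+1} + ⋯ + a_{r+s−1} ≤ a_1 + a_2 + ⋯ + a_s (every window sum of length s is at most the initial window sum of length s). -/
/-- If each term of a nonnegative sequence `a₁, a₂, …` is at most the average of all
previous terms, then every window sum `a_r + ⋯ + a_{r+s-1}` of length `s` is at most the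
initial window sum `a_1 + ⋯ + a_s`. (The sequence is indexed so that `a 0` is irrelevant.) -/
theorem stmt_6 (a : ℕ → ℝ) (ha : ∀ n, 1 ≤ n → 0 ≤ a n)
    (havg : ∀ n : ℕ, 1 ≤ n → a (n + 1) ≤ (∑ i ∈ Finset.Icc 1 n, a i) / n) :
    ∀ r s : ℕ, 1 ≤ r → 1 ≤ s →
      ∑ i ∈ Finset.Ico r (r + s), a i ≤ ∑ i ∈ Finset.Icc 1 s, a i := by
  set S : ℕ → ℝ := fun n => ∑ i ∈ Finset.Icc 1 n, a i with hS
  have hSsucc : ∀ n : ℕ, S (n + 1) = S n + a (n + 1) := by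
    intro n
    simp [hS, Finset.sum_Icc_succ_top (Nat.one_le_iff_ne_zero.mpr (Nat.succ_ne_zero n))]
  have hstep : ∀ n : ℕ, 1 ≤ n → S (n + 1) / (n + 1) ≤ S n / n := by
    intro n hn
    have hn0 : (0 : ℝ) < (n : ℝ) := by exact_mod_cast hn
    have hn1 : (0 : ℝ) < (n : ℝ) + 1 := by linarith
    rw [div_le_div_iff₀ hn1 hn0]
    have h := havg n hn
    have : S (n + 1) = S n + a (n + 1) := hSsucc n
    have h2 : S (n + 1) ≤ S n + S n / n := by
      rw [this]; linarith [h]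
    calc S (n + 1) * n ≤ (S n + S n / n) * n := by nlinarith
      _ = S n * ((n : ℝ) + 1) := by field_simp
  have hmono : ∀ m n : ℕ, 1 ≤ m → m ≤ n → S n / n ≤ S m / m := by
    intro m n hm hmn
    induction n with
    | zero => omega
    | succ k ih =>
      rcases Nat.lt_or_ge m (k + 1) with h | h
      · have hk : 1 ≤ k := by omega
        have h1 := hstep k hk
        have h2 := ih (by omega)
        push_cast at h1 ⊢
        linarith
      · have : m = k + 1 := by omega
        subst this
        exact le_refl _
  intro r s hr hs
  obtain ⟨r', rfl⟩ : ∃ r', r = r' + 1 := ⟨r - 1, by omega⟩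
  have hsum : ∑ i ∈ Finset.Ico (r' + 1) (r' + 1 + s), a i = S (r' + s) - S r' := by
    have h1 : S (r' + s) = S r' + ∑ i ∈ Finset.Ico (r' + 1) (r' + 1 + s), a i := by
      have := Finset.sum_Ico_consecutive a (show 1 ≤ r' + 1 by omega)
        (show r' + 1 ≤ r' + s + 1 by omega)
      simp only [hS]
      rw [show Finset.Icc 1 (r' + s) = Finset.Ico 1 (r' + s + 1) from rfl,
        show Finset.Icc 1 r' = Finset.Ico 1 (r' + 1) from rfl]
      rw [show r' + 1 + s = r' + s + 1 from by omega, ← this]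
    linarith
  rw [hsum]
  rcases Nat.eq_zero_or_pos r' with h0 | hpos
  · subst h0
    simp [hS]
  · -- r' ≥ 1
    have hrs1 : (1 : ℕ) ≤ r' + s := by omega
    have hrs0 : (0 : ℝ) < ((r' + s : ℕ) : ℝ) := by exact_mod_cast hrs1
    have hr'0 : (0 : ℝ) < (r' : ℝ) := by exact_mod_cast hpos
    have hs0 : (0 : ℝ) < (s : ℝ) := by exact_mod_cast hs
    have h1 : S (r' + s) / (r' + s : ℕ) ≤ S r' / r' := hmono r' (r' + s) hpos (by omega)
    have h2 : S (r' + s) / (r' + s : ℕ) ≤ S s / s := hmono s (r' + s) hs (by omega)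
    have key1 : (r' : ℝ) * (S (r' + s) / (r' + s : ℕ)) ≤ S r' := by
      have := mul_le_mul_of_nonneg_left h1 (le_of_lt hr'0)
      calc (r' : ℝ) * (S (r' + s) / (r' + s : ℕ)) ≤ (r' : ℝ) * (S r' / r') := this
        _ = S r' := by field_simp
    have key2 : (s : ℝ) * (S (r' + s) / (r' + s : ℕ)) ≤ S s := by
      have := mul_le_mul_of_nonneg_left h2 (le_of_lt hs0)
      calc (s : ℝ) * (S (r' + s) / (r' + s : ℕ)) ≤ (s : ℝ) * (S s / s) := this
        _ = S s := by field_simp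
    have hcast : ((r' + s : ℕ) : ℝ) = (r' : ℝ) + s := by push_cast; ring
    have hSeq : S (r' + s) = ((r' : ℝ) + s) * (S (r' + s) / (r' + s : ℕ)) := by
      rw [← hcast]; field_simp
    nlinarith [key1, key2, hSeq]
end

section
/- There exists a sequence (A_n)_{n≥0} of real numbers with A_n ≥ 1 for all n, such that: (1) A_{m+n} ≤ A_m · A_n for all m, n ≥ 0 (submultiplicativity); (2) the limit λ := lim_{n→∞} A_n^{1/n} exists and satisfies λ > 1; and (3) for every integer m ≥ 1 there are infinitely many integers n ≥ 0 with A_{m(n+1)} = A_{mn}; in particular, for every m ≥ 1 it is not the case that A_{m(n+1)}/A_{mn} ≥ δ^m λ^m eventually in n for any δ ∈ (λ^{−1}, 1]. -/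
open Filter

/-- binary digit sum (popcount) -/
private def bc : ℕ → ℕ
  | 0 => 0
  | n+1 => bc ((n+1)/2) + (n+1) % 2
decreasing_by exact Nat.div_lt_self (Nat.succ_pos n) one_lt_two

private lemma bc_zero : bc 0 = 0 := by rw [bc]

private lemma bc_def (n : ℕ) : bc n = bc (n/2) + n % 2 := by
  cases n with
  | zero => rfl
  | succ n => rw [bc]

private lemma bc_bit (x r : ℕ) (h : r < 2) : bc (2*x + r) = bc x + r := by
  rw [bc_def]
  have h1 : (2*x + r)/2 = x := by omega
  have h2 : (2*x + r) % 2 = r := by omega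
  rw [h1, h2]

private lemma bc_one : bc 1 = 1 := by
  have := bc_bit 0 1 one_lt_two
  simpa [bc_zero] using this

private lemma bc_add_le_aux : ∀ n a b : ℕ, a + b ≤ n → bc (a+b) ≤ bc a + bc b := by
  intro n
  induction n using Nat.strong_induction_on with
  | _ n IH =>
    intro a b hab
    rcases Nat.eq_zero_or_pos (a+b) with h0 | hpos
    · have h : a = 0 ∧ b = 0 := by omega
      simp [h.1, h.2, bc_zero]
    rcases Nat.lt_or_ge (a % 2 + b % 2) 2 with hr | hr
    · have key : a + b = 2 * (a/2 + b/2) + (a%2 + b%2) := by omega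
      rw [key, bc_bit _ _ hr]
      have h1 : bc (a/2 + b/2) ≤ bc (a/2) + bc (b/2) :=
        IH (a/2 + b/2) (by omega) _ _ le_rfl
      have h2 := bc_def a
      have h3 := bc_def b
      omega
    · have hra : a % 2 = 1 := by omega
      have hrb : b % 2 = 1 := by omega
      have key : a + b = 2 * (a/2 + b/2 + 1) + 0 := by omega
      rw [key, bc_bit _ _ (by omega)]
      have h1 : bc (a/2 + b/2 + 1) ≤ bc (a/2 + b/2) + bc 1 :=
        IH (a/2 + b/2 + 1) (by omega) _ _ le_rfl
      have h2 : bc (a/2 + b/2) ≤ bc (a/2) + bc (b/2) :=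
        IH (a/2 + b/2) (by omega) _ _ le_rfl
      have h3 := bc_def a
      have h4 := bc_def b
      rw [bc_one] at h1
      omega

private lemma bc_add_le (a b : ℕ) : bc (a+b) ≤ bc a + bc b :=
  bc_add_le_aux (a+b) a b le_rfl

private lemma bc_add_mul_pow : ∀ J a b : ℕ, a < 2^J → bc (a + b * 2^J) = bc a + bc b := by
  intro J
  induction J with
  | zero =>
    intro a b h
    have ha : a = 0 := by simpa using h
    subst ha
    simp [bc_zero]
  | succ J IH =>
    intro a b h
    have e : b * 2^(J+1) = 2 * (b * 2^J) := by rw [pow_succ]; ring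
    have e2 : (2:ℕ)^(J+1) = 2 * 2^J := by rw [pow_succ]; ring
    have key : a + b * 2^(J+1) = 2 * (a/2 + b * 2^J) + a % 2 := by omega
    have ha2 : a/2 < 2^J := by omega
    rw [key, bc_bit _ _ (by omega), IH _ b ha2, bc_def a]
    omega

private lemma bc_mul_pow (J b : ℕ) : bc (b * 2^J) = bc b := by
  have h : (0:ℕ) < 2^J := by positivity
  have := bc_add_mul_pow J 0 b h
  simpa [bc_zero] using this

private lemma bc_pred_add : ∀ t m : ℕ, 1 ≤ m → m ≤ 2^t → bc (m-1) + bc (2^t - m) = t := by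
  intro t
  induction t with
  | zero =>
    intro m h1 h2
    have h0 : (2:ℕ)^0 = 1 := rfl
    have : m = 1 := by omega
    subst this
    simp [bc_zero]
  | succ t IH =>
    intro m h1 h2
    have e : (2:ℕ)^(t+1) = 2 * 2^t := by rw [pow_succ]; ring
    rcases Nat.even_or_odd m with he | ho
    · obtain ⟨k, hk⟩ := he
      have hk1 : 1 ≤ k := by omega
      have hk2 : k ≤ 2^t := by omega
      have e1 : m - 1 = 2*(k-1) + 1 := by omega
      have e2 : 2^(t+1) - m = 2*(2^t - k) + 0 := by omega
      rw [e1, e2, bc_bit _ _ one_lt_two, bc_bit _ _ two_pos]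
      have := IH k hk1 hk2
      omega
    · obtain ⟨k, hk⟩ := ho
      have hk2 : k + 1 ≤ 2^t := by omega
      have e1 : m - 1 = 2*k + 0 := by omega
      have e2 : 2^(t+1) - m = 2*(2^t - (k+1)) + 1 := by omega
      rw [e1, e2, bc_bit _ _ two_pos, bc_bit _ _ one_lt_two]
      have h := IH (k+1) (by omega) hk2
      have ek : (k+1) - 1 = k := by omega
      rw [ek] at h
      omega

private lemma bc_key (m t : ℕ) (h1 : 1 ≤ m) (h2 : m ≤ 2^t) :
    bc (m * (2^t - 1)) = t := by
  have hp : (0:ℕ) < 2^t := by positivity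
  have p1 : m * (2^t - 1) + m = m * 2^t := by
    have h3 : 2^t - 1 + 1 = 2^t := by omega
    calc m * (2^t-1) + m = m * ((2^t - 1) + 1) := by ring
    _ = m * 2^t := by rw [h3]
  have p2 : (m-1) * 2^t + 2^t = m * 2^t := by
    obtain ⟨m', rfl⟩ : ∃ m', m = m' + 1 := ⟨m-1, by omega⟩
    have : (m' + 1) - 1 = m' := by omega
    rw [this]
    ring
  have e : m * (2^t - 1) = (2^t - m) + (m-1) * 2^t := by omega
  rw [e, bc_add_mul_pow t _ _ (by omega : 2^t - m < 2^t)]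
  have := bc_pred_add t m h1 h2
  omega

private lemma bc_le_log : ∀ n : ℕ, bc n ≤ Nat.log 2 n + 1 := by
  intro n
  induction n using Nat.strong_induction_on with
  | _ n IH =>
    match n with
    | 0 => simp [bc_zero]
    | 1 => rw [bc_one]; simp
    | (n+2) =>
      rw [bc_def]
      have h1 : bc ((n+2)/2) ≤ Nat.log 2 ((n+2)/2) + 1 := IH _ (by omega)
      have h2 : Nat.log 2 ((n+2)/2) = Nat.log 2 (n+2) - 1 := Nat.log_div_base 2 (n+2)
      have h3 : 0 < Nat.log 2 (n+2) := Nat.log_pos one_lt_two (by omega)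
      omega

/-- There is a submultiplicative sequence `A_n ≥ 1` whose growth rate
`λ = lim A_n^{1/n}` exists and is `> 1`, yet for every `m ≥ 1` there are infinitely many
`n` with `A_{m(n+1)} = A_{mn}`; in particular for every `m ≥ 1` and every
`δ ∈ (λ⁻¹, 1]` it is not true that eventually `A_{m(n+1)}/A_{mn} ≥ δ^m λ^m`. -/
theorem stmt_8 :
    ∃ A : ℕ → ℝ, (∀ n, 1 ≤ A n) ∧
      (∀ m n : ℕ, A (m + n) ≤ A m * A n) ∧
      ∃ l : ℝ,
        Tendsto (fun n : ℕ => (A n) ^ ((n : ℝ)⁻¹)) atTop (nhds l) ∧ 1 < l ∧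
        (∀ m : ℕ, 1 ≤ m → ∀ N : ℕ, ∃ n ≥ N, A (m * (n + 1)) = A (m * n)) ∧
        (∀ m : ℕ, 1 ≤ m → ∀ δ : ℝ, l⁻¹ < δ → δ ≤ 1 →
          ¬ (∀ᶠ n : ℕ in atTop, δ ^ m * l ^ m ≤ A (m * (n + 1)) / A (m * n))) := by
  set A : ℕ → ℝ := fun n => (2:ℝ) ^ (n + bc n) with hA
  -- the equality part, proved first so it can be reused
  have hEq : ∀ m : ℕ, 1 ≤ m → ∀ N : ℕ, ∃ n ≥ N, A (m * (n + 1)) = A (m * n) := by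
    intro m hm N
    set t := m + bc m with ht
    have htm : m ≤ 2^t := by
      calc m ≤ 2^m := (Nat.lt_two_pow_self (n := m)).le
      _ ≤ 2^t := Nat.pow_le_pow_right (by norm_num) (by omega)
    set x0 := m * (2^t - 1) with hx0
    set J := N + x0 + m * 2^t + 1 with hJ
    have hJ1 : x0 < 2^J := by
      calc x0 < 2^x0 := Nat.lt_two_pow_self (n := x0)
      _ ≤ 2^J := Nat.pow_le_pow_right (by norm_num) (by omega)
    have hJ2 : m * 2^t < 2^J := by
      calc m * 2^t < 2^(m * 2^t) := Nat.lt_two_pow_self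
      _ ≤ 2^J := Nat.pow_le_pow_right (by norm_num) (by omega)
    have ht1 : 1 ≤ t := by omega
    have h2t : 2 ≤ 2^t := by
      calc (2:ℕ) = 2^1 := rfl
      _ ≤ 2^t := Nat.pow_le_pow_right (by norm_num) ht1
    refine ⟨(2^t - 1) * (2^J + 1), ?_, ?_⟩
    · have hle : (2^J + 1) ≤ (2^t - 1) * (2^J + 1) :=
        Nat.le_mul_of_pos_left _ (by omega)
      have := Nat.lt_two_pow_self (n := J)
      omega
    · set n := (2^t - 1) * (2^J + 1) with hn
      have e1 : m * n = x0 + x0 * 2^J := by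
        have : m * n = x0 * (2^J + 1) := by rw [hn, hx0]; ring
        rw [this]; ring
      have p1 : x0 + m = m * 2^t := by
        have h3 : 2^t - 1 + 1 = 2^t := by omega
        calc x0 + m = m * ((2^t - 1) + 1) := by rw [hx0]; ring
        _ = m * 2^t := by rw [h3]
      have e2 : m * (n+1) = m * 2^t + x0 * 2^J := by
        have hms : m * (n+1) = m * n + m := by ring
        omega
      have hbcx0 : bc x0 = t := bc_key m t hm htm
      have b1 : bc (m*n) = t + t := by
        rw [e1, bc_add_mul_pow J x0 x0 hJ1, hbcx0]
      have b2 : bc (m*(n+1)) = bc m + t := by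
        rw [e2, bc_add_mul_pow J _ x0 hJ2, bc_mul_pow, hbcx0]
      show (2:ℝ) ^ (m*(n+1) + bc (m*(n+1))) = (2:ℝ) ^ (m*n + bc (m*n))
      congr 1
      have hms : m * (n+1) = m * n + m := by ring
      omega
  refine ⟨A, ?_, ?_, 2, ?_, one_lt_two, hEq, ?_⟩
  · intro n
    exact one_le_pow₀ (by norm_num)
  · intro m n
    rw [hA]
    simp only
    rw [← pow_add]
    apply pow_le_pow_right₀ (by norm_num : (1:ℝ) ≤ 2)
    have := bc_add_le m n
    omega
  · -- the limit
    have hlog : Tendsto (fun x : ℝ => Real.log x / x) atTop (nhds 0) :=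
      Real.isLittleO_log_id_atTop.tendsto_div_nhds_zero
    have hlogn : Tendsto (fun n : ℕ => Real.log n / n) atTop (nhds 0) :=
      hlog.comp tendsto_natCast_atTop_atTop
    have hupper : Tendsto
        (fun n : ℕ => (Real.log n / n) * (Real.log 2)⁻¹ + 1 / n) atTop (nhds 0) := by
      have h1 := hlogn.mul_const (Real.log 2)⁻¹
      have h2 := tendsto_one_div_atTop_nhds_zero_nat (𝕜 := ℝ)
      simpa using h1.add h2
    have hbc_div : Tendsto (fun n : ℕ => (bc n : ℝ) / n) atTop (nhds 0) := by
      apply squeeze_zero' (g := fun n : ℕ => (Real.log n / n) * (Real.log 2)⁻¹ + 1 / n)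
      · filter_upwards [eventually_ge_atTop 1] with n hn
        positivity
      · filter_upwards [eventually_ge_atTop 1] with n hn
        have hn0 : (0:ℝ) < (n:ℝ) := by exact_mod_cast hn
        have hb1 : (bc n : ℝ) ≤ (Nat.log 2 n : ℝ) + 1 := by
          exact_mod_cast bc_le_log n
        have hb2 : (Nat.log 2 n : ℝ) ≤ Real.logb 2 n := Real.natLog_le_logb n 2
        have hb3 : Real.logb 2 (n:ℝ) = Real.log n * (Real.log 2)⁻¹ := by
          rw [Real.logb]; ring
        have hnum : (bc n : ℝ) ≤ Real.log n * (Real.log 2)⁻¹ + 1 := by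
          rw [← hb3]; linarith
        have : (bc n : ℝ) / n ≤ (Real.log n * (Real.log 2)⁻¹ + 1) / n := by gcongr
        calc (bc n : ℝ) / n ≤ (Real.log n * (Real.log 2)⁻¹ + 1) / n := this
        _ = (Real.log n / n) * (Real.log 2)⁻¹ + 1 / n := by ring
      · exact hupper
    have h1 : Tendsto (fun n : ℕ => 1 + (bc n : ℝ)/n) atTop (nhds 1) := by
      simpa using hbc_div.const_add 1
    have h2 : Tendsto (fun n : ℕ => (2:ℝ) ^ (1 + (bc n:ℝ)/n)) atTop (nhds 2) := by
      have hc : ContinuousAt (fun x : ℝ => (2:ℝ) ^ x) 1 :=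
        Real.continuousAt_const_rpow (by norm_num)
      have := hc.tendsto.comp h1
      simpa [Real.rpow_one, Function.comp_def] using this
    apply h2.congr'
    filter_upwards [eventually_ge_atTop 1] with n hn
    have hn0 : ((n:ℝ)) ≠ 0 := Nat.cast_ne_zero.mpr (by omega)
    show (2:ℝ) ^ (1 + (bc n:ℝ)/n) = A n ^ ((n:ℝ)⁻¹)
    rw [hA]
    simp only
    rw [← Real.rpow_natCast 2 (n + bc n), ← Real.rpow_mul (by norm_num : (0:ℝ) ≤ 2)]
    congr 1
    push_cast
    field_simp
  · -- the negation part
    intro m hm δ hδl hδ1 H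
    obtain ⟨N, hN⟩ := eventually_atTop.1 H
    obtain ⟨n, hnN, heq⟩ := hEq m hm N
    have hApos : (0:ℝ) < A (m*n) := by
      rw [hA]; positivity
    have h1 : δ^m * 2^m ≤ 1 := by
      have := hN n hnN
      rwa [heq, div_self (ne_of_gt hApos)] at this
    have hδ2 : 1 < δ * 2 := by
      have : (2:ℝ)⁻¹ < δ := hδl
      linarith [this]
    have h2 : (1:ℝ) < (δ * 2)^m := one_lt_pow₀ hδ2 (by omega)
    rw [← mul_pow] at h1
    linarith
end

section
/- Let N ≥ 1 be an integer and let W be a set of positive integers (so 0 ∉ W) whose counting function has zero density: if w_n denotes the number of elements k of W with 1 ≤ k ≤ n, then w_n/n → 0 as n → ∞. Let p : ℕ → ℕ be a function with p(0) = 0 such that for every j ≥ 0: if p(j) ∉ W then p(j+1) = p(j) + 1, and if p(j) ∈ W then p(j) < p(j+1) ≤ p(j) + N. For each n ≥ 1 let r(n) be the least integer r with n ≤ p(r) (such r exists since p is strictly increasing, hence unbounded). Then r(n)/n → 1 as n → ∞. -/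
open Filter

/-- Reparametrization lemma: if `W` is a set of positive integers of zero density,
and `p : ℕ → ℕ` satisfies `p 0 = 0`, steps by `1` outside `W` and by at most `N` on `W`
(always strictly increasing), and `r n` is the least `r` with `n ≤ p r`, then
`r n / n → 1`. -/
theorem stmt_9 (N : ℕ) (hN : 1 ≤ N) (W : Set ℕ) (hW0 : 0 ∉ W)
    (hdens : Tendsto (fun n : ℕ => ((W ∩ Set.Icc 1 n).ncard : ℝ) / n) atTop (nhds 0))
    (p : ℕ → ℕ) (hp0 : p 0 = 0)
    (hstep : ∀ j : ℕ, (p j ∉ W → p (j + 1) = p j + 1) ∧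
      (p j ∈ W → p j < p (j + 1) ∧ p (j + 1) ≤ p j + N))
    (r : ℕ → ℕ)
    (hr : ∀ n : ℕ, 1 ≤ n → n ≤ p (r n) ∧ ∀ r' : ℕ, n ≤ p r' → r n ≤ r') :
    Tendsto (fun n : ℕ => (r n : ℝ) / n) atTop (nhds 1) := by
  classical
  have hmono : ∀ j, p j < p (j + 1) := by
    intro j
    by_cases h : p j ∈ W
    · exact ((hstep j).2 h).1
    · have := (hstep j).1 h; omega
  have hps : StrictMono p := strictMono_nat_of_lt_succ hmono
  have hle : ∀ j, j ≤ p j := by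
    intro j
    induction j with
    | zero => omega
    | succ k ih => have := hmono k; omega
  have hstepN : ∀ j, p (j + 1) ≤ p j + N := by
    intro j
    by_cases h : p j ∈ W
    · exact ((hstep j).2 h).2
    · have := (hstep j).1 h; omega
  -- counting bound: p j ≤ j + (N-1) * #{i < j : p i ∈ W}
  have hcount : ∀ j, p j ≤ j + (N - 1) *
      ((Finset.range j).filter (fun i => p i ∈ W)).card := by
    intro j
    induction j with
    | zero => simp [hp0]
    | succ k ih =>
      have hsub : (Finset.range k).filter (fun i => p i ∈ W) ⊆
          (Finset.range (k + 1)).filter (fun i => p i ∈ W) :=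
        Finset.filter_subset_filter _ (by intro x hx; simp at hx ⊢; omega)
      have hcardle := Finset.card_le_card hsub
      by_cases h : p k ∈ W
      · have hc : ((Finset.range (k + 1)).filter (fun i => p i ∈ W)).card =
            ((Finset.range k).filter (fun i => p i ∈ W)).card + 1 := by
          rw [Finset.range_add_one, Finset.filter_insert, if_pos h,
            Finset.card_insert_of_notMem (by simp)]
        have := ((hstep k).2 h).2
        rw [hc, Nat.mul_add, Nat.mul_one]
        omega
      · have := (hstep k).1 h
        have : p (k + 1) = p k + 1 := this
        have hmul : (N - 1) * ((Finset.range k).filter (fun i => p i ∈ W)).card ≤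
            (N - 1) * ((Finset.range (k + 1)).filter (fun i => p i ∈ W)).card :=
          Nat.mul_le_mul_left _ hcardle
        omega
  -- the filter count is ≤ the density count at p j
  have hinj : ∀ j, ((Finset.range j).filter (fun i => p i ∈ W)).card ≤
      (W ∩ Set.Icc 1 (p j)).ncard := by
    intro j
    have hfin : (W ∩ Set.Icc 1 (p j)).Finite :=
      (Set.finite_Icc 1 (p j)).inter_of_right W
    have himg : (p '' ((Finset.range j).filter (fun i => p i ∈ W) : Set ℕ)) ⊆
        W ∩ Set.Icc 1 (p j) := by
      rintro x ⟨i, hi, rfl⟩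
      simp only [Finset.coe_filter, Set.mem_setOf_eq, Finset.mem_range] at hi
      refine ⟨hi.2, ?_, ?_⟩
      · have : p i ≠ 0 := fun h0 => hW0 (h0 ▸ hi.2)
        omega
      · exact le_of_lt (hps hi.1)
    calc ((Finset.range j).filter (fun i => p i ∈ W)).card
        = ((Finset.range j).filter (fun i => p i ∈ W) : Set ℕ).ncard := by
          rw [Set.ncard_coe_finset]
      _ = (p '' ((Finset.range j).filter (fun i => p i ∈ W) : Set ℕ)).ncard :=
          (Set.ncard_image_of_injective _ hps.injective).symm
      _ ≤ (W ∩ Set.Icc 1 (p j)).ncard := Set.ncard_le_ncard himg hfin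
  have hpbound : ∀ j, p j ≤ j + (N - 1) * (W ∩ Set.Icc 1 (p j)).ncard := by
    intro j
    exact le_trans (hcount j) (by
      have := Nat.mul_le_mul_left (N - 1) (hinj j); omega)
  -- r n ≤ n and n ≤ r n + (N-1) * w (n + N)
  have hrn_le : ∀ n, 1 ≤ n → r n ≤ n := fun n hn => (hr n hn).2 n (hle n)
  have hrn_pos : ∀ n, 1 ≤ n → 1 ≤ r n := by
    intro n hn
    by_contra h
    have h0 : r n = 0 := by omega
    have := (hr n hn).1
    rw [h0, hp0] at this
    omega
  have hprn : ∀ n, 1 ≤ n → p (r n) ≤ n + N := by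
    intro n hn
    have h1 := hrn_pos n hn
    have hlt : p (r n - 1) < n := by
      by_contra h
      have := (hr n hn).2 (r n - 1) (by omega)
      omega
    have : p (r n - 1 + 1) ≤ p (r n - 1) + N := hstepN (r n - 1)
    have heq : r n - 1 + 1 = r n := by omega
    rw [heq] at this
    omega
  have hmain : ∀ n, 1 ≤ n →
      n ≤ r n + (N - 1) * (W ∩ Set.Icc 1 (n + N)).ncard := by
    intro n hn
    have h1 := (hr n hn).1
    have h2 := hpbound (r n)
    have h3 : (W ∩ Set.Icc 1 (p (r n))).ncard ≤ (W ∩ Set.Icc 1 (n + N)).ncard := by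
      apply Set.ncard_le_ncard
      · exact Set.inter_subset_inter_right W (Set.Icc_subset_Icc_right (hprn n hn))
      · exact (Set.finite_Icc 1 (n + N)).inter_of_right W
    have := Nat.mul_le_mul_left (N - 1) h3
    omega
  -- squeeze
  have hzero : Tendsto (fun n : ℕ => ((W ∩ Set.Icc 1 (n + N)).ncard : ℝ) / n)
      atTop (nhds 0) := by
    have h1 : Tendsto (fun n : ℕ => ((W ∩ Set.Icc 1 (n + N)).ncard : ℝ) / ((n + N : ℕ) : ℝ))
        atTop (nhds 0) := by
      have := hdens.comp (tendsto_add_atTop_nat N)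
      simpa [Function.comp_def] using this
    have h2 : Tendsto (fun n : ℕ => ((n : ℝ) + N) / n) atTop (nhds 1) := by
      have : Tendsto (fun n : ℕ => 1 + (N : ℝ) / n) atTop (nhds (1 + 0)) :=
        tendsto_const_nhds.add (tendsto_const_nhds.div_atTop tendsto_natCast_atTop_atTop)
      apply Tendsto.congr' _ (by simpa using this)
      filter_upwards [eventually_ge_atTop 1] with n hn
      have hn' : (n : ℝ) ≠ 0 := by positivity
      field_simp
    have := h1.mul h2
    rw [zero_mul] at this
    apply Tendsto.congr' _ this
    filter_upwards [eventually_ge_atTop 1] with n hn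
    have hn' : (n : ℝ) ≠ 0 := by positivity
    have hnN : (n : ℝ) + N ≠ 0 := by positivity
    have hnN' : ((n + N : ℕ) : ℝ) ≠ 0 := by positivity
    push_cast
    field_simp
  have hlow : Tendsto (fun n : ℕ => 1 - ((N : ℝ) - 1) *
      (((W ∩ Set.Icc 1 (n + N)).ncard : ℝ) / n)) atTop (nhds 1) := by
    have := (tendsto_const_nhds (x := ((N : ℝ) - 1))).mul hzero
    rw [mul_zero] at this
    simpa using tendsto_const_nhds.sub this
  apply tendsto_of_tendsto_of_tendsto_of_le_of_le' hlow tendsto_const_nhds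
  · filter_upwards [eventually_ge_atTop 1] with n hn
    have hm := hmain n hn
    have hn' : (0 : ℝ) < n := by positivity
    have hcast : ((n : ℝ)) ≤ ((r n + (N - 1) * (W ∩ Set.Icc 1 (n + N)).ncard : ℕ) : ℝ) := by
      exact_mod_cast hm
    push_cast at hcast
    have hN1 : ((N - 1 : ℕ) : ℝ) = (N : ℝ) - 1 := by
      have : 1 ≤ N := hN
      push_cast [this]
      ring
    rw [hN1] at hcast
    have heq : 1 - ((N : ℝ) - 1) * (((W ∩ Set.Icc 1 (n + N)).ncard : ℝ) / n) =
        ((n : ℝ) - ((N : ℝ) - 1) * ((W ∩ Set.Icc 1 (n + N)).ncard : ℝ)) / n := by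
      field_simp
    rw [heq, div_le_div_iff_of_pos_right hn']
    linarith
  · filter_upwards [eventually_ge_atTop 1] with n hn
    have := hrn_le n hn
    have hn' : (0 : ℝ) < n := by positivity
    rw [div_le_one hn']
    exact_mod_cast this
end

section
/- Let (h_n)_{n≥0} be a sequence of real numbers with h_n ≥ 1 for all n, and let D ≥ 1 be a real number with h_{n+1} ≤ D·h_n for all n ≥ 0. Let β₁ > 1 and 0 < β₂ < 1 be real numbers, let N ≥ 1 be an integer, and let W be a set of positive integers (so 0 ∉ W) with zero density: the number w_n of elements of W in {1, …, n} satisfies w_n/n → 0. Assume: (a) h_1 > h_0; (b) for every n ≥ 1 with n ∉ W, one has h_{n+1} − β₂·h_n ≥ β₁·(h_n − β₂·h_{n−1}); (c) for every n ≥ 1 with n ∈ W, there exists an integer t with 0 ≤ t ≤ N such that h_{n+t+1} > h_{n+t} and h_{n+t} > h_n. Then liminf_{n→∞} h_n^{1/n} ≥ β₁. -/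
open Filter

set_option maxHeartbeats 1000000

/-- Analytic core of the proof of the Kawaguchi–Silverman conjecture for surfaces:
a height-like sequence `h_n ≥ 1` with bounded one-step growth, satisfying the recursion
`h_{n+1} - β₂ h_n ≥ β₁ (h_n - β₂ h_{n-1})` off a density-zero set `W` of positive
integers, and gaining height within `N` steps at times in `W`, has
`liminf h_n^{1/n} ≥ β₁`. -/
theorem stmt_10 (h : ℕ → ℝ) (hh : ∀ n, 1 ≤ h n)
    (D : ℝ) (hD : 1 ≤ D) (hDstep : ∀ n : ℕ, h (n + 1) ≤ D * h n)
    (β₁ β₂ : ℝ) (hβ₁ : 1 < β₁) (hβ₂0 : 0 < β₂) (hβ₂1 : β₂ < 1)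
    (N : ℕ) (hN : 1 ≤ N) (W : Set ℕ) (hW0 : 0 ∉ W)
    (hdens : Tendsto (fun n : ℕ => ((W ∩ Set.Icc 1 n).ncard : ℝ) / n) atTop (nhds 0))
    (ha : h 0 < h 1)
    (hb : ∀ n : ℕ, 1 ≤ n → n ∉ W →
      β₁ * (h n - β₂ * h (n - 1)) ≤ h (n + 1) - β₂ * h n)
    (hc : ∀ n : ℕ, 1 ≤ n → n ∈ W →
      ∃ t : ℕ, t ≤ N ∧ h (n + t) < h (n + t + 1) ∧ h n < h (n + t)) :
    β₁ ≤ liminf (fun n : ℕ => (h n) ^ ((n : ℝ)⁻¹)) atTop := by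
  have hβ₁0 : (0:ℝ) < β₁ := lt_trans one_pos hβ₁
  have hD0 : (0:ℝ) < D := lt_of_lt_of_le one_pos hD
  have h1β₂ : (0:ℝ) < 1 - β₂ := by linarith
  have hpos : ∀ n, (0:ℝ) < h n := fun n => lt_of_lt_of_le one_pos (hh n)
  set c : ℝ := (1 - β₂) / β₁ with hc_def
  set F : ℝ := (1 - β₂) / (D ^ N * β₁ ^ (N + 2)) with hF_def
  have hc0 : 0 < c := div_pos h1β₂ hβ₁0
  have hF0 : 0 < F := div_pos h1β₂ (by positivity)
  have hDN1 : (1:ℝ) ≤ D ^ N := one_le_pow₀ hD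
  have hβ₁N2 : (1:ℝ) ≤ β₁ ^ (N + 2) := one_le_pow₀ hβ₁.le
  have hF1 : F ≤ 1 := by
    rw [hF_def, div_le_one (by positivity)]
    nlinarith
  -- D-chain bound
  have hDchain : ∀ a s : ℕ, h (a + s) ≤ D ^ s * h a := by
    intro a s
    induction s with
    | zero => simp
    | succ s ih =>
      calc h (a + s + 1) ≤ D * h (a + s) := hDstep (a + s)
        _ ≤ D * (D ^ s * h a) := mul_le_mul_of_nonneg_left ih hD0.le
        _ = D ^ (s + 1) * h a := by ring
  -- Sublemma A: exponential growth along W-free stretches from a good point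
  have A : ∀ m k : ℕ, h m ≤ h (m + 1) → (∀ i, m < i → i ≤ m + k → i ∉ W) →
      (1 - β₂) * β₁ ^ k * h m ≤ h (m + k + 1) := by
    intro m k hg hWfree
    have hgm : (1 - β₂) * h m ≤ h (m + 1) - β₂ * h m := by linarith
    have chain : ∀ j, j ≤ k →
        β₁ ^ j * (h (m + 1) - β₂ * h m) ≤ h (m + j + 1) - β₂ * h (m + j) := by
      intro j hj
      induction j with
      | zero => simp
      | succ j ih =>
        have hj' : j ≤ k := Nat.le_of_succ_le hj
        have hnW : m + j + 1 ∉ W := hWfree _ (by omega) (by omega)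
        have hb' := hb (m + j + 1) (by omega) hnW
        have harith : m + j + 1 - 1 = m + j := by omega
        rw [harith] at hb'
        have hmul := mul_le_mul_of_nonneg_left (ih hj') hβ₁0.le
        have heq : m + (j + 1) + 1 = m + j + 1 + 1 := by omega
        have heq2 : m + (j + 1) = m + j + 1 := by omega
        rw [heq, heq2]
        calc β₁ ^ (j + 1) * (h (m + 1) - β₂ * h m)
            = β₁ * (β₁ ^ j * (h (m + 1) - β₂ * h m)) := by ring
          _ ≤ β₁ * (h (m + j + 1) - β₂ * h (m + j)) := hmul
          _ ≤ h (m + j + 1 + 1) - β₂ * h (m + j + 1) := hb'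
    have hck := chain k le_rfl
    have h1 : β₁ ^ k * ((1 - β₂) * h m) ≤ β₁ ^ k * (h (m + 1) - β₂ * h m) :=
      mul_le_mul_of_nonneg_left hgm (by positivity)
    have h2 : (0:ℝ) ≤ β₂ * h (m + k) := le_of_lt (mul_pos hβ₂0 (hpos _))
    nlinarith
  -- Main growth lemma
  have Q : ∀ d : ℕ, 1 ≤ d → ∀ m : ℕ, h m ≤ h (m + 1) →
      c * F ^ (W ∩ Set.Ioc m (m + d)).ncard * β₁ ^ d * h m ≤ h (m + d) := by
    intro d
    induction d using Nat.strong_induction_on with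
    | _ d IH =>
      intro hd1 m hgood
      obtain ⟨e, rfl⟩ : ∃ e, d = e + 1 := ⟨d - 1, by omega⟩
      have hfinBig : (W ∩ Set.Ioc m (m + (e + 1))).Finite :=
        (Set.finite_Ioc m (m + (e + 1))).inter_of_right W
      set j := (W ∩ Set.Ioc m (m + (e + 1))).ncard with hj_def
      have hFj1 : F ^ j ≤ 1 := pow_le_one₀ hF0.le hF1
      by_cases hS : ∀ i, m < i → i ≤ m + e → i ∉ W
      · -- no W element in the interior: pure growth
        have hA := A m e hgood hS
        have h1 : c * β₁ ^ (e + 1) = (1 - β₂) * β₁ ^ e := by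
          rw [hc_def]; field_simp; ring
        have h2 : c * F ^ j * β₁ ^ (e + 1) ≤ c * 1 * β₁ ^ (e + 1) :=
          mul_le_mul_of_nonneg_right
            (mul_le_mul_of_nonneg_left hFj1 hc0.le) (by positivity)
        calc c * F ^ j * β₁ ^ (e + 1) * h m ≤ c * 1 * β₁ ^ (e + 1) * h m :=
              mul_le_mul_of_nonneg_right h2 (hpos m).le
          _ = (1 - β₂) * β₁ ^ e * h m := by rw [mul_one, h1]
          _ ≤ h (m + e + 1) := hA
          _ = h (m + (e + 1)) := by rw [← Nat.add_assoc]
      · push_neg at hS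
        obtain ⟨i₀, hi₀1, hi₀2, hi₀W⟩ := hS
        have hTne : {i : ℕ | m < i ∧ i ≤ m + e ∧ i ∈ W}.Nonempty := ⟨i₀, hi₀1, hi₀2, hi₀W⟩
        set m' := sInf {i : ℕ | m < i ∧ i ≤ m + e ∧ i ∈ W} with hm'_def
        obtain ⟨hmm', hm'me, hm'W⟩ := Nat.sInf_mem hTne
        have hm'min : ∀ i, m < i → i ≤ m + e → i < m' → i ∉ W := by
          intro i h1 h2 h3 hiW
          have hle : sInf {i : ℕ | m < i ∧ i ≤ m + e ∧ i ∈ W} ≤ i :=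
            Nat.sInf_le (show i ∈ {i : ℕ | m < i ∧ i ≤ m + e ∧ i ∈ W} from ⟨h1, h2, hiW⟩)
          rw [← hm'_def] at hle
          omega
        set k1 := m' - m - 1 with hk1_def
        have hm'eq : m + k1 + 1 = m' := by omega
        have hAm' : (1 - β₂) * β₁ ^ k1 * h m ≤ h m' := by
          have hfree : ∀ i, m < i → i ≤ m + k1 → i ∉ W := by
            intro i hi1 hi2
            exact hm'min i hi1 (by omega) (by omega)
          have := A m k1 hgood hfree
          rwa [hm'eq] at this
        obtain ⟨t, htN, hpgood, hup⟩ := hc m' (by omega) hm'W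
        have hgoodp : h (m' + t) ≤ h (m' + t + 1) := le_of_lt hpgood
        have hm'p : h m' ≤ h (m' + t) := le_of_lt hup
        have hm'Big : m' ∈ W ∩ Set.Ioc m (m + (e + 1)) :=
          ⟨hm'W, by simp only [Set.mem_Ioc]; omega⟩
        have hj1 : 1 ≤ j := (Set.ncard_pos hfinBig).mpr ⟨m', hm'Big⟩
        have hFjF : F ^ j ≤ F := by
          calc F ^ j ≤ F ^ 1 := pow_le_pow_of_le_one hF0.le hF1 hj1
            _ = F := pow_one F
        by_cases hpd : m + (e + 1) ≤ m' + t
        · -- bridge case: target lies within the N-step window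
          have hbridge : h (m' + t) ≤ D ^ N * h (m + (e + 1)) := by
            have h1 : m + (e + 1) + (m' + t - (m + (e + 1))) = m' + t := by omega
            have h2 := hDchain (m + (e + 1)) (m' + t - (m + (e + 1)))
            rw [h1] at h2
            have h3 : D ^ (m' + t - (m + (e + 1))) ≤ D ^ N :=
              pow_le_pow_right₀ hD (by omega)
            calc h (m' + t) ≤ D ^ (m' + t - (m + (e + 1))) * h (m + (e + 1)) := h2
              _ ≤ D ^ N * h (m + (e + 1)) :=
                  mul_le_mul_of_nonneg_right h3 (hpos _).le
          -- so D^N * h(m+e+1) ≥ h m' ≥ (1-β₂) β₁^k1 h m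
          have hlow : (1 - β₂) * β₁ ^ k1 * h m ≤ D ^ N * h (m + (e + 1)) :=
            le_trans hAm' (le_trans hm'p hbridge)
          -- key numeric inequality
          have hexp : e + 1 ≤ k1 + N + 3 := by omega
          have hpowkey : β₁ ^ (e + 1) ≤ β₁ ^ (k1 + N + 3) := pow_le_pow_right₀ hβ₁.le hexp
          have hkey : c * F * β₁ ^ (e + 1) * D ^ N ≤ (1 - β₂) * β₁ ^ k1 := by
            rw [hc_def, hF_def]
            rw [div_mul_div_comm]
            rw [div_mul_eq_mul_div, div_mul_eq_mul_div, div_le_iff₀ (by positivity)]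
            have hrhs : (1 - β₂) * β₁ ^ k1 * (β₁ * (D ^ N * β₁ ^ (N + 2)))
                = (1 - β₂) * D ^ N * β₁ ^ (k1 + N + 3) := by ring
            rw [hrhs]
            calc (1 - β₂) * (1 - β₂) * β₁ ^ (e + 1) * D ^ N
                ≤ 1 * (1 - β₂) * β₁ ^ (e + 1) * D ^ N := by
                    nlinarith [mul_pos hβ₂0 (mul_pos h1β₂ (mul_pos (pow_pos hβ₁0 (e+1)) (pow_pos hD0 N)))]
              _ = (1 - β₂) * D ^ N * β₁ ^ (e + 1) := by ring
              _ ≤ (1 - β₂) * D ^ N * β₁ ^ (k1 + N + 3) :=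
                  mul_le_mul_of_nonneg_left hpowkey (by positivity)
          have hstep1 : c * F ^ j * β₁ ^ (e + 1) * h m ≤ c * F * β₁ ^ (e + 1) * h m := by
            apply mul_le_mul_of_nonneg_right _ (hpos m).le
            exact mul_le_mul_of_nonneg_right
              (mul_le_mul_of_nonneg_left hFjF hc0.le) (by positivity)
          have hstep2 : c * F * β₁ ^ (e + 1) * h m * D ^ N ≤ (1 - β₂) * β₁ ^ k1 * h m := by
            calc c * F * β₁ ^ (e + 1) * h m * D ^ N
                = (c * F * β₁ ^ (e + 1) * D ^ N) * h m := by ring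
              _ ≤ ((1 - β₂) * β₁ ^ k1) * h m :=
                  mul_le_mul_of_nonneg_right hkey (hpos m).le
              _ = (1 - β₂) * β₁ ^ k1 * h m := by ring
          -- combine: c F^j β₁^(e+1) h m * D^N ≤ D^N * h(m+e+1)
          have hfin : c * F ^ j * β₁ ^ (e + 1) * h m * D ^ N ≤ D ^ N * h (m + (e + 1)) := by
            calc c * F ^ j * β₁ ^ (e + 1) * h m * D ^ N
                ≤ c * F * β₁ ^ (e + 1) * h m * D ^ N :=
                  mul_le_mul_of_nonneg_right hstep1 (by positivity)
              _ ≤ (1 - β₂) * β₁ ^ k1 * h m := hstep2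
              _ ≤ D ^ N * h (m + (e + 1)) := hlow
          have hDNpos : (0:ℝ) < D ^ N := by positivity
          nlinarith [hfin]
        · -- recursive case
          push_neg at hpd
          set d' := m + (e + 1) - (m' + t) with hd'_def
          have hd'1 : 1 ≤ d' := by omega
          have hd'lt : d' < e + 1 := by omega
          have hIH := IH d' hd'lt hd'1 (m' + t) hgoodp
          have hpd' : m' + t + d' = m + (e + 1) := by omega
          rw [hpd'] at hIH
          set j' := (W ∩ Set.Ioc (m' + t) (m + (e + 1))).ncard with hj'_def
          -- cardinality: j ≥ j' + 1
          have hjj' : j' + 1 ≤ j := by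
            have hsub : insert m' (W ∩ Set.Ioc (m' + t) (m + (e + 1)))
                ⊆ W ∩ Set.Ioc m (m + (e + 1)) := by
              intro x hx
              rcases Set.mem_insert_iff.mp hx with rfl | hx
              · exact hm'Big
              · exact ⟨hx.1, by
                  have := hx.2
                  simp only [Set.mem_Ioc] at this ⊢
                  omega⟩
            have hnotmem : m' ∉ (W ∩ Set.Ioc (m' + t) (m + (e + 1))) := by
              intro hx
              have := hx.2.1
              omega
            have hfin' : (W ∩ Set.Ioc (m' + t) (m + (e + 1))).Finite :=
              (Set.finite_Ioc _ _).inter_of_right W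
            have h5 : (W ∩ Set.Ioc (m' + t) (m + (e + 1))).ncard + 1
                ≤ (W ∩ Set.Ioc m (m + (e + 1))).ncard := by
              rw [← Set.ncard_insert_of_notMem hnotmem hfin']
              exact Set.ncard_le_ncard hsub hfinBig
            omega
          -- h (m'+t) ≥ h m' ≥ (1-β₂) β₁^k1 h m
          have hlowp : (1 - β₂) * β₁ ^ k1 * h m ≤ h (m' + t) := le_trans hAm' hm'p
          -- combine
          have hcomb : c * F ^ j' * β₁ ^ d' * ((1 - β₂) * β₁ ^ k1 * h m) ≤ h (m + (e + 1)) := by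
            calc c * F ^ j' * β₁ ^ d' * ((1 - β₂) * β₁ ^ k1 * h m)
                ≤ c * F ^ j' * β₁ ^ d' * h (m' + t) :=
                  mul_le_mul_of_nonneg_left hlowp (by positivity)
              _ ≤ h (m + (e + 1)) := hIH
          -- key numeric inequality : F * β₁^(e+1) ≤ (1-β₂) * β₁^(d'+k1)
          have hexp : e + 1 ≤ N + 2 + (d' + k1) := by omega
          have hpowkey : β₁ ^ (e + 1) ≤ β₁ ^ (N + 2 + (d' + k1)) := pow_le_pow_right₀ hβ₁.le hexp
          have hkey : F * β₁ ^ (e + 1) ≤ (1 - β₂) * β₁ ^ (d' + k1) := by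
            rw [hF_def, div_mul_eq_mul_div, div_le_iff₀ (by positivity)]
            calc (1 - β₂) * β₁ ^ (e + 1)
                ≤ (1 - β₂) * β₁ ^ (N + 2 + (d' + k1)) :=
                  mul_le_mul_of_nonneg_left hpowkey h1β₂.le
              _ = (1 - β₂) * β₁ ^ (d' + k1) * β₁ ^ (N + 2) := by rw [pow_add]; ring
              _ ≤ (1 - β₂) * β₁ ^ (d' + k1) * (D ^ N * β₁ ^ (N + 2)) := by
                  apply mul_le_mul_of_nonneg_left _ (by positivity)
                  nlinarith
          -- final chain
          have hFj : F ^ j ≤ F ^ (j' + 1) := pow_le_pow_of_le_one hF0.le hF1 hjj'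
          calc c * F ^ j * β₁ ^ (e + 1) * h m
              ≤ c * F ^ (j' + 1) * β₁ ^ (e + 1) * h m := by
                apply mul_le_mul_of_nonneg_right _ (hpos m).le
                exact mul_le_mul_of_nonneg_right
                  (mul_le_mul_of_nonneg_left hFj hc0.le) (by positivity)
            _ = c * F ^ j' * (F * β₁ ^ (e + 1)) * h m := by ring
            _ ≤ c * F ^ j' * ((1 - β₂) * β₁ ^ (d' + k1)) * h m := by
                apply mul_le_mul_of_nonneg_right _ (hpos m).le
                exact mul_le_mul_of_nonneg_left hkey (by positivity)
            _ = c * F ^ j' * β₁ ^ d' * ((1 - β₂) * β₁ ^ k1 * h m) := by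
                rw [pow_add]; ring
            _ ≤ h (m + (e + 1)) := hcomb
  -- pointwise lower bound from 0
  have hIoc : ∀ n : ℕ, W ∩ Set.Ioc 0 n = W ∩ Set.Icc 1 n := by
    intro n
    ext x
    simp only [Set.mem_inter_iff, Set.mem_Ioc, Set.mem_Icc]
    constructor <;> (rintro ⟨h1, h2⟩; exact ⟨h1, by omega⟩)
  have main : ∀ n : ℕ, 1 ≤ n →
      c * F ^ (W ∩ Set.Icc 1 n).ncard * β₁ ^ n ≤ h n := by
    intro n hn
    have hQ := Q n hn 0 (le_of_lt ha)
    rw [Nat.zero_add, hIoc n] at hQ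
    calc c * F ^ (W ∩ Set.Icc 1 n).ncard * β₁ ^ n
        = c * F ^ (W ∩ Set.Icc 1 n).ncard * β₁ ^ n * 1 := by ring
      _ ≤ c * F ^ (W ∩ Set.Icc 1 n).ncard * β₁ ^ n * h 0 :=
          mul_le_mul_of_nonneg_left (hh 0) (by positivity)
      _ ≤ h n := hQ
  -- define the comparison sequence
  set w : ℕ → ℕ := fun n => (W ∩ Set.Icc 1 n).ncard with hw_def
  set b : ℕ → ℝ := fun n =>
    c ^ ((n : ℝ)⁻¹) * F ^ (((w n : ℝ)) * (n : ℝ)⁻¹) * β₁ with hbdef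
  -- eventually b n ≤ h n ^ (n⁻¹)
  have hev : ∀ᶠ n in atTop, b n ≤ h n ^ ((n : ℝ)⁻¹) := by
    filter_upwards [eventually_ge_atTop 1] with n hn
    have hn0 : (n : ℝ) ≠ 0 := Nat.cast_ne_zero.mpr (by omega)
    have hinv : (0:ℝ) ≤ (n : ℝ)⁻¹ := inv_nonneg.mpr (Nat.cast_nonneg n)
    have h1 : (c * F ^ (w n) * β₁ ^ n) ^ ((n : ℝ)⁻¹) ≤ h n ^ ((n : ℝ)⁻¹) :=
      Real.rpow_le_rpow (by positivity) (main n hn) hinv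
    have h2 : (c * F ^ (w n) * β₁ ^ n) ^ ((n : ℝ)⁻¹) = b n := by
      rw [Real.mul_rpow (by positivity) (by positivity),
          Real.mul_rpow (by positivity) (by positivity)]
      congr 1
      · congr 1
        rw [← Real.rpow_natCast F (w n), ← Real.rpow_mul hF0.le]
      · rw [← Real.rpow_natCast β₁ n, ← Real.rpow_mul hβ₁0.le,
            mul_inv_cancel₀ hn0, Real.rpow_one]
    rw [← h2]; exact h1
  -- b tends to β₁
  have texp : ∀ (a : ℝ), 0 < a → ∀ (u : ℕ → ℝ), Tendsto u atTop (nhds 0) →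
      Tendsto (fun n => a ^ u n) atTop (nhds 1) := by
    intro a ha0 u hu
    have heq : (fun n => a ^ u n) = fun n => Real.exp (Real.log a * u n) :=
      funext fun n => Real.rpow_def_of_pos ha0 (u n)
    rw [heq]
    have hmul : Tendsto (fun n => Real.log a * u n) atTop (nhds 0) := by
      simpa using hu.const_mul (Real.log a)
    have := (Real.continuous_exp.tendsto 0).comp hmul
    simpa [Function.comp_def] using this
  have tinv : Tendsto (fun n : ℕ => (n : ℝ)⁻¹) atTop (nhds 0) :=
    tendsto_inv_atTop_zero.comp tendsto_natCast_atTop_atTop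
  have tw : Tendsto (fun n : ℕ => ((w n : ℝ)) * (n : ℝ)⁻¹) atTop (nhds 0) := by
    have : (fun n : ℕ => ((w n : ℝ)) * (n : ℝ)⁻¹)
        = fun n : ℕ => ((W ∩ Set.Icc 1 n).ncard : ℝ) / n := by
      funext n; rw [div_eq_mul_inv]
    rw [this]; exact hdens
  have tb : Tendsto b atTop (nhds β₁) := by
    have t1 := texp c hc0 _ tinv
    have t2 := texp F hF0 _ tw
    have := (t1.mul t2).mul_const β₁
    simpa using this
  -- conclude via liminf
  have hlim : liminf b atTop = β₁ := tb.liminf_eq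
  have hub : ∀ᶠ n in atTop, h n ^ ((n:ℝ)⁻¹) ≤ D * h 0 := by
    filter_upwards [eventually_ge_atTop 1] with n hn
    have hn0 : (n : ℝ) ≠ 0 := Nat.cast_ne_zero.mpr (by omega)
    have hn1 : (1:ℝ) ≤ (n : ℝ) := by exact_mod_cast hn
    have hinv : (0:ℝ) ≤ (n : ℝ)⁻¹ := inv_nonneg.mpr (Nat.cast_nonneg n)
    have hinv1 : (n : ℝ)⁻¹ ≤ 1 := by
      calc (n : ℝ)⁻¹ ≤ 1⁻¹ := by
            apply inv_anti₀ one_pos hn1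
        _ = 1 := inv_one
    have h1 : h n ≤ D ^ n * h 0 := by
      have := hDchain 0 n
      simpa using this
    calc h n ^ ((n:ℝ)⁻¹) ≤ (D ^ n * h 0) ^ ((n:ℝ)⁻¹) :=
          Real.rpow_le_rpow (hpos n).le h1 hinv
      _ = (D ^ n) ^ ((n:ℝ)⁻¹) * h 0 ^ ((n:ℝ)⁻¹) :=
          Real.mul_rpow (by positivity) (hpos 0).le
      _ = D * h 0 ^ ((n:ℝ)⁻¹) := by
          rw [← Real.rpow_natCast D n, ← Real.rpow_mul hD0.le,
            mul_inv_cancel₀ hn0, Real.rpow_one]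
      _ ≤ D * h 0 := by
          have : h 0 ^ ((n:ℝ)⁻¹) ≤ h 0 ^ (1:ℝ) :=
            Real.rpow_le_rpow_of_exponent_le (hh 0) hinv1
          rw [Real.rpow_one] at this
          exact mul_le_mul_of_nonneg_left this hD0.le
  rw [← hlim]
  exact liminf_le_liminf hev tb.isBoundedUnder_ge
    (isCoboundedUnder_ge_of_eventually_le atTop hub)
end
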